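/- Let α ∈ (0,1], let L be slowly varying at infinity, ψ(λ) = λ^{1+α} L(1/λ), φ(z) = ∫_z^∞ dξ/ψ(ξ), φ⁻¹ its inverse, and F̄(t) = 1 - exp(-φ⁻¹(t)). Then F̄ is regularly varying at infinity with index -1/α; consequently, for every δ > 0, t^{1/α+δ} F̄(t) → ∞ and t^{1/α-δ} F̄(t) → 0 as t → ∞. -/

import Mathlib

open Filter MeasureTheory Set Real
open Topology

lemma rpow_logb_comm {ρ x : ℝ} (hρ : 0 < ρ) (hx : 0 < x) :
    ρ ^ Real.logb 2 x = x ^ Real.logb 2 ρ := by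
  rw [Real.rpow_def_of_pos hρ, Real.rpow_def_of_pos hx, Real.logb, Real.logb]
  ring_nf

lemma key_atTop (f : ℝ → ℝ) (p ρ T : ℝ) (hT : 1 ≤ T) (hρ : 1 < ρ)
    (hpos : ∀ t, T ≤ t → 0 < f t) (hanti : ∀ s t, T ≤ s → s ≤ t → f t ≤ f s)
    (hstep : ∀ t, T ≤ t → ρ * (t ^ p * f t) ≤ (2 * t) ^ p * f (2 * t)) :
    Tendsto (fun t => t ^ p * f t) atTop atTop := by
  have hT0 : (0:ℝ) < T := lt_of_lt_of_le one_pos hT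
  have hρ0 : (0:ℝ) < ρ := lt_trans one_pos hρ
  have hdy : ∀ n : ℕ, T ≤ 2 ^ n * T := by
    intro n
    nlinarith [pow_le_pow_right₀ (by norm_num : (1:ℝ) ≤ 2) (Nat.zero_le n), hT0]
  have hiter : ∀ n : ℕ, ρ ^ n * (T ^ p * f T) ≤ (2 ^ n * T) ^ p * f (2 ^ n * T) := by
    intro n
    induction n with
    | zero => simp
    | succ n ih =>
      have h1 := hstep _ (hdy n)
      calc ρ ^ (n+1) * (T ^ p * f T) = ρ * (ρ ^ n * (T ^ p * f T)) := by ring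
        _ ≤ ρ * ((2 ^ n * T) ^ p * f (2 ^ n * T)) := by
            exact mul_le_mul_of_nonneg_left ih hρ0.le
        _ ≤ (2 * (2 ^ n * T)) ^ p * f (2 * (2 ^ n * T)) := h1
        _ = (2 ^ (n+1) * T) ^ p * f (2 ^ (n+1) * T) := by ring_nf
  set β := Real.logb 2 ρ with hβdef
  have hβ : 0 < β := Real.logb_pos one_lt_two hρ
  set c : ℝ := min 1 ((2:ℝ) ^ (-p)) with hc
  have hc0 : 0 < c := lt_min one_pos (Real.rpow_pos_of_pos two_pos _)
  have hfT : 0 < T ^ p * f T := mul_pos (Real.rpow_pos_of_pos hT0 _) (hpos T le_rfl)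
  have key : ∀ t, T ≤ t → c * (T ^ p * f T) * (t / T) ^ β ≤ t ^ p * f t := by
    intro t ht
    have ht0 : 0 < t := lt_of_lt_of_le hT0 ht
    have hq : 0 < t / T := div_pos ht0 hT0
    have hq1 : 1 ≤ t / T := (one_le_div hT0).2 ht
    have hlogb0 : 0 ≤ Real.logb 2 (t / T) := Real.logb_nonneg one_lt_two hq1
    set n : ℕ := ⌊Real.logb 2 (t / T)⌋₊ with hn
    have hub : Real.logb 2 (t / T) < (n:ℝ) + 1 := Nat.lt_floor_add_one _
    have hlb : (n:ℝ) ≤ Real.logb 2 (t / T) := Nat.floor_le hlogb0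
    have h2n : (2:ℝ) ^ n * T ≤ t := by
      have := (Real.le_logb_iff_rpow_le (b := 2) one_lt_two hq).1 hlb
      rw [Real.rpow_natCast] at this
      calc (2:ℝ) ^ n * T ≤ (t / T) * T := by
            exact mul_le_mul_of_nonneg_right this hT0.le
        _ = t := by field_simp
    have h2n1 : t ≤ 2 ^ (n+1) * T := by
      have h := (Real.logb_lt_iff_lt_rpow (b := 2) one_lt_two hq).1 (by exact_mod_cast hub)
      rw [Real.rpow_natCast] at h
      calc t = (t / T) * T := by field_simp
        _ ≤ 2 ^ (n+1) * T := mul_le_mul_of_nonneg_right h.le hT0.le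
    have hfle : f (2 ^ (n+1) * T) ≤ f t := hanti t _ ht h2n1
    have h2n1pos : (0:ℝ) < 2 ^ (n+1) * T := mul_pos (by positivity) hT0
    have hsplit : (2:ℝ) ^ (-p) * ((2:ℝ) ^ (n+1) * T) ^ p = ((2:ℝ) ^ n * T) ^ p := by
      rw [Real.rpow_neg two_pos.le, ← Real.inv_rpow two_pos.le,
        ← Real.mul_rpow (by positivity) h2n1pos.le]
      congr 1
      ring
    have htp : c * (2 ^ (n+1) * T) ^ p ≤ t ^ p := by
      rcases le_or_gt 0 p with hp | hp
      · have h1 : ((2:ℝ) ^ n * T) ^ p ≤ t ^ p := Real.rpow_le_rpow (by positivity) h2n hp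
        have h2 : c * (2 ^ (n+1) * T) ^ p ≤ (2:ℝ) ^ (-p) * ((2:ℝ) ^ (n+1) * T) ^ p :=
          mul_le_mul_of_nonneg_right (min_le_right _ _) (Real.rpow_nonneg h2n1pos.le _)
        rw [hsplit] at h2
        exact h2.trans h1
      · have h1 : (2 ^ (n+1) * T) ^ p ≤ t ^ p := Real.rpow_le_rpow_of_nonpos ht0 h2n1 hp.le
        have h2 : c * (2 ^ (n+1) * T) ^ p ≤ 1 * (2 ^ (n+1) * T) ^ p :=
          mul_le_mul_of_nonneg_right (min_le_left _ _) (Real.rpow_nonneg h2n1pos.le _)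
        rw [one_mul] at h2
        exact h2.trans h1
    have hrpown : (t / T) ^ β ≤ ρ ^ (n+1) := by
      have h1 : (t / T) ^ β = ρ ^ Real.logb 2 (t / T) := (rpow_logb_comm hρ0 hq).symm
      rw [h1, show (ρ:ℝ) ^ (n+1) = ρ ^ ((n:ℝ)+1) by
        rw [show ((n:ℝ)+1) = ((n+1 : ℕ) : ℝ) by push_cast; ring, Real.rpow_natCast]]
      exact Real.rpow_le_rpow_of_exponent_le hρ.le hub.le
    calc c * (T ^ p * f T) * (t / T) ^ β ≤ c * (T ^ p * f T) * ρ ^ (n+1) := by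
          exact mul_le_mul_of_nonneg_left hrpown (by positivity)
      _ = c * (ρ ^ (n+1) * (T ^ p * f T)) := by ring
      _ ≤ c * ((2 ^ (n+1) * T) ^ p * f (2 ^ (n+1) * T)) := by
          exact mul_le_mul_of_nonneg_left (hiter (n+1)) hc0.le
      _ = (c * (2 ^ (n+1) * T) ^ p) * f (2 ^ (n+1) * T) := by ring
      _ ≤ t ^ p * f t := by
          exact mul_le_mul htp hfle (le_of_lt (hpos _ (hdy (n+1)))) (Real.rpow_nonneg ht0.le _)
  have hten : Tendsto (fun t => c * (T ^ p * f T) * (t / T) ^ β) atTop atTop := by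
    apply Tendsto.const_mul_atTop (mul_pos hc0 hfT)
    exact (tendsto_rpow_atTop hβ).comp (tendsto_id.atTop_div_const hT0)
  exact tendsto_atTop_mono' atTop (eventually_atTop.2 ⟨T, key⟩) hten

lemma key_zero (f : ℝ → ℝ) (p ρ T : ℝ) (hT : 1 ≤ T) (hρ0 : 0 < ρ) (hρ : ρ < 1)
    (hpos : ∀ t, T ≤ t → 0 < f t) (hanti : ∀ s t, T ≤ s → s ≤ t → f t ≤ f s)
    (hstep : ∀ t, T ≤ t → (2 * t) ^ p * f (2 * t) ≤ ρ * (t ^ p * f t)) :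
    Tendsto (fun t => t ^ p * f t) atTop (𝓝 0) := by
  have hT0 : (0:ℝ) < T := lt_of_lt_of_le one_pos hT
  have hdy : ∀ n : ℕ, T ≤ 2 ^ n * T := by
    intro n
    nlinarith [pow_le_pow_right₀ (by norm_num : (1:ℝ) ≤ 2) (Nat.zero_le n), hT0]
  have hiter : ∀ n : ℕ, (2 ^ n * T) ^ p * f (2 ^ n * T) ≤ ρ ^ n * (T ^ p * f T) := by
    intro n
    induction n with
    | zero => simp
    | succ n ih =>
      have h1 := hstep _ (hdy n)
      calc (2 ^ (n+1) * T) ^ p * f (2 ^ (n+1) * T)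
          = (2 * (2 ^ n * T)) ^ p * f (2 * (2 ^ n * T)) := by ring_nf
        _ ≤ ρ * ((2 ^ n * T) ^ p * f (2 ^ n * T)) := h1
        _ ≤ ρ * (ρ ^ n * (T ^ p * f T)) := mul_le_mul_of_nonneg_left ih hρ0.le
        _ = ρ ^ (n+1) * (T ^ p * f T) := by ring
  set β := Real.logb 2 ρ with hβdef
  have hβ : β < 0 := Real.logb_neg one_lt_two hρ0 hρ
  set C : ℝ := max 1 ((2:ℝ) ^ p) with hC
  have hC0 : 0 < C := lt_of_lt_of_le one_pos (le_max_left _ _)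
  have hfT : 0 < T ^ p * f T := mul_pos (Real.rpow_pos_of_pos hT0 _) (hpos T le_rfl)
  set K : ℝ := C * (T ^ p * f T) * ρ⁻¹ with hK
  have key : ∀ t, T ≤ t → t ^ p * f t ≤ K * (t / T) ^ β := by
    intro t ht
    have ht0 : 0 < t := lt_of_lt_of_le hT0 ht
    have hq : 0 < t / T := div_pos ht0 hT0
    have hq1 : 1 ≤ t / T := (one_le_div hT0).2 ht
    have hlogb0 : 0 ≤ Real.logb 2 (t / T) := Real.logb_nonneg one_lt_two hq1
    set n : ℕ := ⌊Real.logb 2 (t / T)⌋₊ with hn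
    have hub : Real.logb 2 (t / T) < (n:ℝ) + 1 := Nat.lt_floor_add_one _
    have hlb : (n:ℝ) ≤ Real.logb 2 (t / T) := Nat.floor_le hlogb0
    have h2npos : (0:ℝ) < 2 ^ n * T := mul_pos (by positivity) hT0
    have h2n : (2:ℝ) ^ n * T ≤ t := by
      have h := (Real.le_logb_iff_rpow_le (b := 2) one_lt_two hq).1 hlb
      rw [Real.rpow_natCast] at h
      calc (2:ℝ) ^ n * T ≤ (t / T) * T := mul_le_mul_of_nonneg_right h hT0.le
        _ = t := by field_simp
    have h2n1 : t ≤ 2 ^ (n+1) * T := by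
      have h := (Real.logb_lt_iff_lt_rpow (b := 2) one_lt_two hq).1 (by exact_mod_cast hub)
      rw [Real.rpow_natCast] at h
      calc t = (t / T) * T := by field_simp
        _ ≤ 2 ^ (n+1) * T := mul_le_mul_of_nonneg_right h.le hT0.le
    have hfle : f t ≤ f (2 ^ n * T) := hanti _ t (hdy n) h2n
    have htp : t ^ p ≤ C * (2 ^ n * T) ^ p := by
      rcases le_or_gt 0 p with hp | hp
      · have h1 : t ^ p ≤ ((2:ℝ) ^ (n+1) * T) ^ p :=
          Real.rpow_le_rpow ht0.le h2n1 hp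
        have h2 : ((2:ℝ) ^ (n+1) * T) ^ p = (2:ℝ) ^ p * ((2:ℝ) ^ n * T) ^ p := by
          rw [← Real.mul_rpow two_pos.le h2npos.le]
          congr 1
          ring
        have h3 : (2:ℝ) ^ p * ((2:ℝ) ^ n * T) ^ p ≤ C * (2 ^ n * T) ^ p :=
          mul_le_mul_of_nonneg_right (le_max_right _ _) (Real.rpow_nonneg h2npos.le _)
        rw [h2] at h1
        exact h1.trans h3
      · have h1 : t ^ p ≤ ((2:ℝ) ^ n * T) ^ p :=
          Real.rpow_le_rpow_of_nonpos h2npos h2n hp.le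
        have h3 : ((2:ℝ) ^ n * T) ^ p ≤ C * (2 ^ n * T) ^ p := by
          nlinarith [Real.rpow_nonneg h2npos.le p, hC0, le_max_left (1:ℝ) ((2:ℝ) ^ p)]
        exact h1.trans h3
    have hrpown : ρ ^ n ≤ ρ⁻¹ * (t / T) ^ β := by
      have h1 : (t / T) ^ β = ρ ^ Real.logb 2 (t / T) := (rpow_logb_comm hρ0 hq).symm
      have h2 : (ρ:ℝ) ^ n = ρ ^ ((n:ℝ)) := (Real.rpow_natCast ρ n).symm
      have h3 : ρ ^ ((n:ℝ)) ≤ ρ ^ (Real.logb 2 (t / T) - 1) :=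
        Real.rpow_le_rpow_of_exponent_ge hρ0 hρ.le (by linarith)
      have h4 : ρ ^ (Real.logb 2 (t / T) - 1) = ρ⁻¹ * ρ ^ Real.logb 2 (t / T) := by
        rw [Real.rpow_sub hρ0, Real.rpow_one]
        ring
      rw [h2, h1, ← h4]
      exact h3
    calc t ^ p * f t ≤ (C * (2 ^ n * T) ^ p) * f (2 ^ n * T) := by
          exact mul_le_mul htp hfle (hpos t ht).le
            (mul_nonneg hC0.le (Real.rpow_nonneg h2npos.le _))
        _ = C * ((2 ^ n * T) ^ p * f (2 ^ n * T)) := by ring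
        _ ≤ C * (ρ ^ n * (T ^ p * f T)) := mul_le_mul_of_nonneg_left (hiter n) hC0.le
        _ ≤ C * ((ρ⁻¹ * (t / T) ^ β) * (T ^ p * f T)) := by
          apply mul_le_mul_of_nonneg_left _ hC0.le
          exact mul_le_mul_of_nonneg_right hrpown hfT.le
        _ = K * (t / T) ^ β := by rw [hK]; ring
  have hb0 : Tendsto (fun t : ℝ => K * (t / T) ^ β) atTop (𝓝 0) := by
    have h1 : Tendsto (fun t : ℝ => (t / T) ^ β) atTop (𝓝 0) := by
      have := (tendsto_rpow_neg_atTop (y := -β) (by linarith)).comp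
        (tendsto_id.atTop_div_const hT0)
      simpa [Function.comp_def] using this
    simpa using h1.const_mul K
  apply squeeze_zero' (g := fun t : ℝ => K * (t / T) ^ β) _ _ hb0
  · filter_upwards [eventually_ge_atTop T] with t ht
    have ht0 : 0 < t := lt_of_lt_of_le hT0 ht
    exact mul_nonneg (Real.rpow_nonneg ht0.le _) (hpos t ht).le
  · filter_upwards [eventually_ge_atTop T] with t ht
    exact key t ht

/-- for `ψ(λ) = λ^{1+α} L(1/λ)` with `α ∈ (0,1]`,
`φ(z) = ∫_z^∞ dξ/ψ ξ`, and `F̄(t) = 1 - exp(-φ⁻¹(t))`, the function `F̄` is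
regularly varying at infinity with index `-1/α`; consequently, for every
`δ > 0`, `t^{1/α+δ} F̄(t) → ∞` and `t^{1/α-δ} F̄(t) → 0`. -/
theorem stmt8 (α : ℝ) (hα : 0 < α) (hα1 : α ≤ 1)
    (L : ℝ → ℝ) (hLpos : ∀ x > 0, 0 < L x)
    (hL : ∀ l > 0, Tendsto (fun x => L (l * x) / L x) atTop (nhds 1))
    (ψ : ℝ → ℝ) (hψ : ∀ l > 0, ψ l = l ^ (1 + α) * L (1 / l))
    (φ φinv : ℝ → ℝ)
    (hφ : ∀ z > 0, φ z = ∫ ξ in Set.Ioi z, 1 / ψ ξ)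
    (hbij : Set.BijOn φ (Set.Ioi 0) (Set.Ioi 0))
    (hinv : Set.InvOn φinv φ (Set.Ioi 0) (Set.Ioi 0))
    (F : ℝ → ℝ) (hF : ∀ t > 0, F t = 1 - Real.exp (-(φinv t))) :
    (∀ l > 0, Tendsto (fun t => F (l * t) / F t) atTop (nhds (l ^ (-(1 / α))))) ∧
    (∀ δ > 0, Tendsto (fun t => t ^ (1 / α + δ) * F t) atTop atTop) ∧
    (∀ δ > 0, Tendsto (fun t => t ^ (1 / α - δ) * F t) atTop (nhds 0)) := by
  have hψpos : ∀ l > 0, 0 < ψ l := by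
    intro l hl
    rw [hψ l hl]
    exact mul_pos (Real.rpow_pos_of_pos hl _) (hLpos _ (by positivity))
  have hφpos : ∀ z > 0, 0 < φ z := fun z hz => hbij.mapsTo hz
  have hint : ∀ a > 0, IntegrableOn (fun ξ => 1 / ψ ξ) (Set.Ioi a) := by
    intro a ha
    by_contra hni
    have h0 := hφpos a ha
    rw [hφ a ha, integral_undef hni] at h0
    exact lt_irrefl 0 h0
  have hmono : ∀ a b : ℝ, 0 < a → a < b → φ b < φ a := by
    intro a b ha hab
    have hb : 0 < b := ha.trans hab
    have h1 : IntegrableOn (fun ξ => 1 / ψ ξ) (Set.Ioc a b) :=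
      (hint a ha).mono_set Set.Ioc_subset_Ioi_self
    have h2 : IntegrableOn (fun ξ => 1 / ψ ξ) (Set.Ioi b) := hint b hb
    have hsplit : φ a = (∫ ξ in Set.Ioc a b, 1 / ψ ξ) + φ b := by
      rw [hφ a ha, hφ b hb,
        ← setIntegral_union (Set.Ioc_disjoint_Ioi le_rfl) measurableSet_Ioi h1 h2,
        Set.Ioc_union_Ioi_eq_Ioi hab.le]
    have hposI : 0 < ∫ ξ in Set.Ioc a b, 1 / ψ ξ := by
      rw [setIntegral_pos_iff_support_of_nonneg_ae ?_ h1]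
      · have hsub : Set.Ioc a b ⊆ Function.support fun ξ => 1 / ψ ξ := by
          intro x hx
          exact ne_of_gt (one_div_pos.2 (hψpos x (ha.trans hx.1)))
        rw [Set.inter_eq_right.2 hsub, Real.volume_Ioc]
        exact ENNReal.ofReal_pos.2 (by linarith)
      · rw [EventuallyLE, ae_restrict_iff' measurableSet_Ioc]
        exact ae_of_all _ fun x hx => le_of_lt (one_div_pos.2 (hψpos x (ha.trans hx.1)))
    linarith
  have hsurj : ∀ t > 0, φinv t ∈ Set.Ioi 0 ∧ φ (φinv t) = t := by
    intro t ht
    obtain ⟨x, hx, hxt⟩ := hbij.surjOn ht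
    have : φinv t = x := by rw [← hxt, hinv.1 hx]
    rw [this]
    exact ⟨hx, hxt⟩
  have hφinvanti : ∀ s t : ℝ, 0 < s → s ≤ t → φinv t ≤ φinv s := by
    intro s t hs hst
    by_contra hcon
    push_neg at hcon
    have ht : 0 < t := lt_of_lt_of_le hs hst
    have := hmono _ _ (hsurj s hs).1 hcon
    rw [(hsurj s hs).2, (hsurj t ht).2] at this
    linarith
  have hφtop : Tendsto φ (𝓝[>] (0:ℝ)) atTop := by
    rw [tendsto_atTop]
    intro b
    obtain ⟨x, hx, hxc⟩ := hbij.surjOn (show max b 1 ∈ Set.Ioi (0:ℝ) from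
      Set.mem_Ioi.2 (lt_of_lt_of_le one_pos (le_max_right _ _)))
    filter_upwards [Ioo_mem_nhdsGT_of_mem (Set.left_mem_Ico.2 hx)] with z hz
    have := hmono z x hz.1 hz.2
    rw [hxc] at this
    exact le_of_lt (lt_of_le_of_lt (le_max_left _ _) this)
  have hφinv0 : Tendsto φinv atTop (𝓝[>] (0:ℝ)) := by
    rw [tendsto_nhdsWithin_iff]
    constructor
    · rw [tendsto_order]
      constructor
      · intro a ha
        filter_upwards [eventually_gt_atTop 0] with t ht
        exact lt_trans ha (hsurj t ht).1
      · intro a ha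
        have hφa : 0 < φ (a / 2) := hφpos _ (by linarith)
        filter_upwards [eventually_ge_atTop (φ (a / 2))] with t ht
        have h1 : φinv t ≤ φinv (φ (a / 2)) := hφinvanti _ _ hφa ht
        rw [hinv.1 (show a / 2 ∈ Set.Ioi (0:ℝ) from by exact half_pos ha)] at h1
        linarith
    · filter_upwards [eventually_gt_atTop 0] with t ht
      exact (hsurj t ht).1
  -- Regular variation of φ at 0+
  have hRV : ∀ l > 0, Tendsto (fun z => φ (l * z) / φ z) (𝓝[>] (0:ℝ))
      (𝓝 (l ^ (-α))) := by
    intro l hl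
    set w : ℝ → ℝ := fun η => l ^ (1 + α) * (1 / ψ (l * η)) with hw
    have hE1 : ∀ z > 0, l ^ α * φ (l * z) = ∫ η in Set.Ioi z, w η := by
      intro z hz
      have hcv := integral_comp_mul_left_Ioi (fun ξ => 1 / ψ ξ) z hl
      have : ∫ η in Set.Ioi z, w η
          = l ^ (1 + α) * ∫ η in Set.Ioi z, 1 / ψ (l * η) := by
        rw [hw]
        exact MeasureTheory.integral_const_mul _ _
      rw [this, hcv, smul_eq_mul, hφ (l * z) (by positivity), ← mul_assoc]
      congr 1
      rw [Real.rpow_add hl, Real.rpow_one]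
      field_simp
    have hwint : ∀ z > 0, IntegrableOn w (Set.Ioi z) := by
      intro z hz
      apply Integrable.const_mul
      exact (integrableOn_Ioi_comp_mul_left_iff (fun ξ => 1 / ψ ξ) z hl).2
        (hint (l * z) (by positivity))
    set r : ℝ → ℝ := fun η => L (1 / η) / L (1 / (l * η)) with hrdef
    have hE2 : ∀ η > 0, w η = (1 / ψ η) * r η := by
      intro η hη
      have hψη := hψ η hη
      have hψlη := hψ (l * η) (by positivity)
      have hrw : (l * η) ^ (1 + α) = l ^ (1 + α) * η ^ (1 + α) :=
        Real.mul_rpow hl.le hη.le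
      have hL1 : 0 < L (1 / η) := hLpos _ (by positivity)
      have hL2 : 0 < L (1 / (l * η)) := hLpos _ (by positivity)
      have hη1 : (0:ℝ) < η ^ (1 + α) := Real.rpow_pos_of_pos hη _
      have hl1 : (0:ℝ) < l ^ (1 + α) := Real.rpow_pos_of_pos hl _
      simp only [hw, hrdef]
      rw [hψη, hψlη, hrw]
      field_simp
    have hr1 : Tendsto r (𝓝[>] (0:ℝ)) (𝓝 1) := by
      have h0 : Tendsto (fun x => L (l⁻¹ * x) / L x) atTop (𝓝 1) :=
        hL l⁻¹ (inv_pos.2 hl)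
      have h1 : Tendsto (fun x => L x / L (l⁻¹ * x)) atTop (𝓝 1) := by
        have := h0.inv₀ one_ne_zero
        simpa [inv_div] using this
      have h2 : Tendsto (fun η : ℝ => η⁻¹) (𝓝[>] (0:ℝ)) atTop :=
        tendsto_inv_nhdsGT_zero
      have h3 := h1.comp h2
      apply h3.congr
      intro η
      simp only [Function.comp_apply, hrdef, one_div, mul_inv]
    -- core: ratio of integrals tends to 1
    have hcore : Tendsto (fun z => (l ^ α * φ (l * z)) / φ z) (𝓝[>] (0:ℝ)) (𝓝 1) := by
      rw [Metric.tendsto_nhds]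
      intro ε hε
      set ε' : ℝ := ε / 3 with hε'def
      have hε' : 0 < ε' := by positivity
      have hrev : ∀ᶠ η in 𝓝[>] (0:ℝ), |r η - 1| < ε' := by
        have := Metric.tendsto_nhds.1 hr1 ε' hε'
        simpa [Real.dist_eq] using this
      obtain ⟨δ, hδmem, hδsub⟩ := mem_nhdsGT_iff_exists_Ioo_subset.1 hrev
      set d : ℝ := δ / 2 with hd0
      have hdpos : 0 < d := by
        have : (0:ℝ) < δ := hδmem
        positivity
      have hdlt : d < δ := by
        have : (0:ℝ) < δ := hδmem
        simp only [hd0]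
        linarith
      set K : ℝ := |(∫ η in Set.Ioi d, w η) - φ d| with hK
      have hK0 : 0 ≤ K := abs_nonneg _
      filter_upwards [Ioo_mem_nhdsGT_of_mem (Set.left_mem_Ico.2 hdpos),
        hφtop.eventually_ge_atTop ((K + 1) / ε'),
        self_mem_nhdsWithin] with z hzd hzφ hz0
      have hz0' : (0:ℝ) < z := hz0
      have hφz : 0 < φ z := hφpos z hz0'
      have hzd' : z < d := hzd.2
      -- splits
      have hw1 : IntegrableOn w (Set.Ioc z d) := (hwint z hz0').mono_set Set.Ioc_subset_Ioi_self
      have hw2 : IntegrableOn w (Set.Ioi d) := hwint d hdpos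
      have hh1 : IntegrableOn (fun ξ => 1 / ψ ξ) (Set.Ioc z d) :=
        (hint z hz0').mono_set Set.Ioc_subset_Ioi_self
      have hsplitw : (∫ η in Set.Ioi z, w η)
          = (∫ η in Set.Ioc z d, w η) + ∫ η in Set.Ioi d, w η := by
        rw [← setIntegral_union (Set.Ioc_disjoint_Ioi le_rfl) measurableSet_Ioi hw1 hw2,
          Set.Ioc_union_Ioi_eq_Ioi hzd'.le]
      have hsplith : φ z = (∫ η in Set.Ioc z d, 1 / ψ η) + φ d := by
        rw [hφ z hz0', hφ d hdpos,
          ← setIntegral_union (Set.Ioc_disjoint_Ioi le_rfl) measurableSet_Ioi hh1 (hint d hdpos),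
          Set.Ioc_union_Ioi_eq_Ioi hzd'.le]
      -- pointwise bound on Ioc z d
      have hpt : ∀ η ∈ Set.Ioc z d, |w η - 1 / ψ η| ≤ ε' * (1 / ψ η) := by
        intro η hη
        have hηpos : 0 < η := hz0'.trans hη.1
        have hηδ : η ∈ Set.Ioo (0:ℝ) δ := ⟨hηpos, lt_of_le_of_lt hη.2 hdlt⟩
        have hrb : |r η - 1| < ε' := hδsub hηδ
        rw [hE2 η hηpos]
        have : (1 / ψ η) * r η - 1 / ψ η = (1 / ψ η) * (r η - 1) := by ring
        rw [this, abs_mul, abs_of_pos (one_div_pos.2 (hψpos η hηpos))]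
        rw [mul_comm (ε' : ℝ) _]
        exact mul_le_mul_of_nonneg_left hrb.le (le_of_lt (one_div_pos.2 (hψpos η hηpos)))
      -- integral bound on Ioc z d
      have hIbound : |(∫ η in Set.Ioc z d, w η) - ∫ η in Set.Ioc z d, 1 / ψ η|
          ≤ ε' * ∫ η in Set.Ioc z d, 1 / ψ η := by
        rw [← integral_sub hw1 hh1]
        calc |∫ η in Set.Ioc z d, (w η - 1 / ψ η)|
            ≤ ∫ η in Set.Ioc z d, |w η - 1 / ψ η| := by
              simpa [Real.norm_eq_abs] using
                norm_integral_le_integral_norm (μ := volume.restrict (Set.Ioc z d))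
                  (fun η => w η - 1 / ψ η)
          _ ≤ ∫ η in Set.Ioc z d, ε' * (1 / ψ η) :=
              setIntegral_mono_on ((hw1.sub hh1).abs) (hh1.const_mul ε')
                measurableSet_Ioc hpt
          _ = ε' * ∫ η in Set.Ioc z d, 1 / ψ η := MeasureTheory.integral_const_mul _ _
      have hIle : (∫ η in Set.Ioc z d, 1 / ψ η) ≤ φ z := by
        rw [hsplith]
        have := (hφpos d hdpos)
        linarith
      have hInonneg : 0 ≤ ∫ η in Set.Ioc z d, 1 / ψ η :=
        setIntegral_nonneg measurableSet_Ioc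
          (fun x hx => le_of_lt (one_div_pos.2 (hψpos x (hz0'.trans hx.1))))
      -- final estimate
      have hA : l ^ α * φ (l * z) - φ z
          = ((∫ η in Set.Ioc z d, w η) - ∫ η in Set.Ioc z d, 1 / ψ η)
            + ((∫ η in Set.Ioi d, w η) - φ d) := by
        rw [hE1 z hz0', hsplitw, hsplith]
        ring
      have habs : |l ^ α * φ (l * z) - φ z| ≤ ε' * φ z + K := by
        rw [hA]
        calc |_ + _| ≤ |(∫ η in Set.Ioc z d, w η) - ∫ η in Set.Ioc z d, 1 / ψ η|
              + |(∫ η in Set.Ioi d, w η) - φ d| := abs_add_le _ _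
          _ ≤ ε' * (∫ η in Set.Ioc z d, 1 / ψ η) + K := by rw [hK]; gcongr
          _ ≤ ε' * φ z + K := by gcongr
      have hKlt : K < ε' * φ z := by
        have h1 : (K + 1) / ε' ≤ φ z := hzφ
        have h2 : K + 1 ≤ ε' * φ z := by
          rw [div_le_iff₀ hε'] at h1
          linarith [h1]
        linarith
      rw [Real.dist_eq]
      have heq : l ^ α * φ (l * z) / φ z - 1 = (l ^ α * φ (l * z) - φ z) / φ z := by
        field_simp
      rw [heq, abs_div, abs_of_pos hφz, div_lt_iff₀ hφz]
      have : ε' * φ z + K < 2 * ε' * φ z := by linarith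
      calc |l ^ α * φ (l * z) - φ z| ≤ ε' * φ z + K := habs
        _ < 2 * ε' * φ z := this
        _ ≤ ε * φ z := by
          rw [hε'def]
          nlinarith [hφz]
    -- conclude
    have hlα : l ^ (-α) * l ^ α = 1 := by
      rw [← Real.rpow_add hl]
      simp
    have := hcore.const_mul (l ^ (-α))
    rw [mul_one] at this
    apply this.congr
    intro z
    rw [show l ^ (-α) * (l ^ α * φ (l * z) / φ z)
      = (l ^ (-α) * l ^ α) * (φ (l * z) / φ z) by ring, hlα, one_mul]
  -- Regular variation of φinv at infinity
  have hinvRV : ∀ l > 0, Tendsto (fun t => φinv (l * t) / φinv t) atTop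
      (𝓝 (l ^ (-(1 / α)))) := by
    intro l hl
    set m : ℝ := l ^ (-(1 / α)) with hm
    have hm0 : 0 < m := Real.rpow_pos_of_pos hl _
    have hα0 : α ≠ 0 := ne_of_gt hα
    have hml : m ^ (-α) = l := by
      rw [hm, ← Real.rpow_mul hl.le, show -(1 / α) * -α = 1 by
        rw [neg_mul_neg, one_div, inv_mul_cancel₀ hα0]]
      exact Real.rpow_one l
    rw [Metric.tendsto_nhds]
    intro ε hε
    set ε' : ℝ := min (ε / 2) (m / 2) with hε'def
    have hε'0 : 0 < ε' := lt_min (by linarith) (by linarith)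
    have hε'm : ε' ≤ m / 2 := min_le_right _ _
    have hε'ε : ε' < ε := lt_of_le_of_lt (min_le_left _ _) (by linarith)
    set lam1 : ℝ := m - ε' with hlam1
    set lam2 : ℝ := m + ε' with hlam2
    have hlam1pos : 0 < lam1 := by rw [hlam1]; linarith
    have hlam2pos : 0 < lam2 := by rw [hlam2]; linarith
    have hlt1 : l < lam1 ^ (-α) := by
      rw [← hml]
      exact Real.rpow_lt_rpow_of_neg hlam1pos (by rw [hlam1]; linarith) (by linarith)
    have hlt2 : lam2 ^ (-α) < l := by
      rw [← hml]
      exact Real.rpow_lt_rpow_of_neg hm0 (by rw [hlam2]; linarith) (by linarith)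
    have hev1 : ∀ᶠ z in 𝓝[>] (0:ℝ), l < φ (lam1 * z) / φ z :=
      (hRV lam1 hlam1pos).eventually (eventually_gt_nhds hlt1)
    have hev2 : ∀ᶠ z in 𝓝[>] (0:ℝ), φ (lam2 * z) / φ z < l :=
      (hRV lam2 hlam2pos).eventually (eventually_lt_nhds hlt2)
    filter_upwards [hφinv0.eventually (hev1.and hev2), eventually_gt_atTop 0]
      with t hzc ht0
    set z : ℝ := φinv t with hzdef
    have hz0 : 0 < z := (hsurj t ht0).1
    have hφz : φ z = t := (hsurj t ht0).2
    have hφzpos : 0 < φ z := hφpos z hz0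
    have hlt0 : 0 < l * t := by positivity
    have hb1 : lam1 * z ≤ φinv (l * t) := by
      have h1 : l * φ z < φ (lam1 * z) := by
        have := hzc.1
        rw [lt_div_iff₀ hφzpos] at this
        linarith
      rw [hφz] at h1
      have h2 : φinv (φ (lam1 * z)) ≤ φinv (l * t) := hφinvanti _ _ hlt0 h1.le
      rwa [hinv.1 (Set.mem_Ioi.2 (by positivity : (0:ℝ) < lam1 * z))] at h2
    have hb2 : φinv (l * t) ≤ lam2 * z := by
      have h1 : φ (lam2 * z) < l * φ z := by
        have := hzc.2
        rw [div_lt_iff₀ hφzpos] at this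
        linarith
      rw [hφz] at h1
      have h2 : φinv (l * t) ≤ φinv (φ (lam2 * z)) :=
        hφinvanti _ _ (hφpos _ (by positivity)) h1.le
      rwa [hinv.1 (Set.mem_Ioi.2 (by positivity : (0:ℝ) < lam2 * z))] at h2
    rw [Real.dist_eq]
    have hd1 : lam1 ≤ φinv (l * t) / z := (le_div_iff₀ hz0).2 (by linarith)
    have hd2 : φinv (l * t) / z ≤ lam2 := (div_le_iff₀ hz0).2 (by linarith)
    have : |φinv (l * t) / z - m| ≤ ε' := by
      rw [abs_le]
      constructor
      · rw [hlam1] at hd1; linarith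
      · rw [hlam2] at hd2; linarith
    exact lt_of_le_of_lt this hε'ε
  -- Regular variation of F at infinity
  have hFpos : ∀ t > 0, 0 < F t := by
    intro t ht
    rw [hF t ht]
    have : Real.exp (-(φinv t)) < 1 := Real.exp_lt_one_iff.2 (by
      have := (hsurj t ht).1
      simp only [Set.mem_Ioi] at this
      linarith)
    linarith
  have hFRV : ∀ l > 0, Tendsto (fun t => F (l * t) / F t) atTop
      (𝓝 (l ^ (-(1 / α)))) := by
    intro l hl
    have hG : Tendsto (fun u : ℝ => (1 - Real.exp (-u)) / u) (𝓝[≠] (0:ℝ)) (𝓝 1) := by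
      have hd : HasDerivAt (fun u : ℝ => 1 - Real.exp (-u)) 1 0 := by
        have h1 : HasDerivAt (fun u : ℝ => -u) (-1) 0 := (hasDerivAt_id 0).neg
        have h2 := h1.exp
        have h3 := h2.const_sub (1:ℝ)
        simpa using h3
      have hslope := hasDerivAt_iff_tendsto_slope.1 hd
      apply hslope.congr
      intro u
      simp [slope_def_field]
    have hsubne : 𝓝[>] (0:ℝ) ≤ 𝓝[≠] (0:ℝ) :=
      nhdsWithin_mono 0 (fun x hx => ne_of_gt hx)
    have hul : Tendsto (fun t => φinv (l * t)) atTop (𝓝[>] (0:ℝ)) :=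
      hφinv0.comp (tendsto_id.const_mul_atTop hl)
    have T2 : Tendsto (fun t => (1 - Real.exp (-(φinv t))) / φinv t) atTop (𝓝 1) :=
      hG.comp (hφinv0.mono_right hsubne)
    have T3 : Tendsto (fun t => (1 - Real.exp (-(φinv (l * t)))) / φinv (l * t))
        atTop (𝓝 1) := hG.comp (hul.mono_right hsubne)
    have T2inv : Tendsto (fun t => φinv t / (1 - Real.exp (-(φinv t)))) atTop (𝓝 1) := by
      have := T2.inv₀ one_ne_zero
      simpa [inv_div] using this
    have hprod := (T3.mul (hinvRV l hl)).mul T2inv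
    rw [one_mul, mul_one] at hprod
    apply hprod.congr'
    filter_upwards [eventually_gt_atTop 0] with t ht0
    have hlt0 : 0 < l * t := by positivity
    have hut : 0 < φinv t := (hsurj t ht0).1
    have hult : 0 < φinv (l * t) := (hsurj _ hlt0).1
    have hGt : 0 < 1 - Real.exp (-(φinv t)) := by
      have : Real.exp (-(φinv t)) < 1 := Real.exp_lt_one_iff.2 (by linarith)
      linarith
    rw [hF _ hlt0, hF _ ht0]
    field_simp
  refine ⟨hFRV, ?_, ?_⟩
  · -- t ^ (1/α + δ) * F t → ∞
    intro δ hδ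
    set p : ℝ := 1 / α + δ with hp
    set c : ℝ := (2:ℝ) ^ (-(1 / α)) with hcdef
    have hpc : (2:ℝ) ^ p * c = (2:ℝ) ^ δ := by
      rw [hcdef, ← Real.rpow_add two_pos]
      congr 1
      rw [hp]
      ring
    have h2δ : 1 < (2:ℝ) ^ δ := Real.one_lt_rpow_iff_of_pos two_pos |>.2
      (Or.inl ⟨one_lt_two, hδ⟩)
    set ρ : ℝ := (1 + (2:ℝ) ^ δ) / 2 with hρdef
    have hρ1 : 1 < ρ := by rw [hρdef]; linarith
    have hρ2 : ρ < (2:ℝ) ^ δ := by rw [hρdef]; linarith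
    have hevρ : ∀ᶠ t in atTop, ρ < (2:ℝ) ^ p * (F (2 * t) / F t) := by
      have h2c := (hFRV 2 two_pos).const_mul ((2:ℝ) ^ p)
      rw [← hcdef, hpc] at h2c
      exact h2c.eventually (eventually_gt_nhds hρ2)
    obtain ⟨T₀, hT₀⟩ := eventually_atTop.1 hevρ
    set T : ℝ := max T₀ 1 with hT
    have hT1 : (1:ℝ) ≤ T := le_max_right _ _
    have hT0pos : (0:ℝ) < T := lt_of_lt_of_le one_pos hT1
    apply key_atTop F p ρ T hT1 hρ1
    · intro t ht
      exact hFpos t (lt_of_lt_of_le hT0pos ht)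
    · intro s t hs hst
      have hs0 : 0 < s := lt_of_lt_of_le hT0pos hs
      have ht0 : 0 < t := lt_of_lt_of_le hs0 hst
      rw [hF s hs0, hF t ht0]
      have h1 : φinv t ≤ φinv s := hφinvanti s t hs0 hst
      have h2 : Real.exp (-(φinv s)) ≤ Real.exp (-(φinv t)) :=
        Real.exp_le_exp.2 (by linarith)
      linarith
    · intro t ht
      have ht0 : 0 < t := lt_of_lt_of_le hT0pos ht
      have hFt : 0 < F t := hFpos t ht0
      have h := hT₀ t (le_trans (le_max_left _ _) ht)
      have h' : ρ * F t < (2:ℝ) ^ p * F (2 * t) := by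
        rw [← mul_div_assoc] at h
        have := (lt_div_iff₀ hFt).1 h
        linarith [this]
      have hmul : ((2:ℝ) * t) ^ p = (2:ℝ) ^ p * t ^ p :=
        Real.mul_rpow (by norm_num) ht0.le
      have htp : (0:ℝ) ≤ t ^ p := Real.rpow_nonneg ht0.le _
      calc ρ * (t ^ p * F t) = t ^ p * (ρ * F t) := by ring
        _ ≤ t ^ p * ((2:ℝ) ^ p * F (2 * t)) := mul_le_mul_of_nonneg_left h'.le htp
        _ = (2 * t) ^ p * F (2 * t) := by rw [hmul]; ring
  · -- t ^ (1/α - δ) * F t → 0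
    intro δ hδ
    set p : ℝ := 1 / α - δ with hp
    set c : ℝ := (2:ℝ) ^ (-(1 / α)) with hcdef
    have hpc : (2:ℝ) ^ p * c = (2:ℝ) ^ (-δ) := by
      rw [hcdef, ← Real.rpow_add two_pos]
      congr 1
      rw [hp]
      ring
    have h2δ : (2:ℝ) ^ (-δ) < 1 :=
      Real.rpow_lt_one_of_one_lt_of_neg one_lt_two (by linarith)
    have h2δ0 : (0:ℝ) < (2:ℝ) ^ (-δ) := Real.rpow_pos_of_pos two_pos _
    set ρ : ℝ := (1 + (2:ℝ) ^ (-δ)) / 2 with hρdef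
    have hρ1 : ρ < 1 := by rw [hρdef]; linarith
    have hρ0 : 0 < ρ := by rw [hρdef]; linarith
    have hρ2 : (2:ℝ) ^ (-δ) < ρ := by rw [hρdef]; linarith
    have hevρ : ∀ᶠ t in atTop, (2:ℝ) ^ p * (F (2 * t) / F t) < ρ := by
      have h2c := (hFRV 2 two_pos).const_mul ((2:ℝ) ^ p)
      rw [← hcdef, hpc] at h2c
      exact h2c.eventually (eventually_lt_nhds hρ2)
    obtain ⟨T₀, hT₀⟩ := eventually_atTop.1 hevρ
    set T : ℝ := max T₀ 1 with hT
    have hT1 : (1:ℝ) ≤ T := le_max_right _ _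
    have hT0pos : (0:ℝ) < T := lt_of_lt_of_le one_pos hT1
    apply key_zero F p ρ T hT1 hρ0 hρ1
    · intro t ht
      exact hFpos t (lt_of_lt_of_le hT0pos ht)
    · intro s t hs hst
      have hs0 : 0 < s := lt_of_lt_of_le hT0pos hs
      have ht0 : 0 < t := lt_of_lt_of_le hs0 hst
      rw [hF s hs0, hF t ht0]
      have h1 : φinv t ≤ φinv s := hφinvanti s t hs0 hst
      have h2 : Real.exp (-(φinv s)) ≤ Real.exp (-(φinv t)) :=
        Real.exp_le_exp.2 (by linarith)
      linarith
    · intro t ht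
      have ht0 : 0 < t := lt_of_lt_of_le hT0pos ht
      have hFt : 0 < F t := hFpos t ht0
      have h := hT₀ t (le_trans (le_max_left _ _) ht)
      have h' : (2:ℝ) ^ p * F (2 * t) < ρ * F t := by
        rw [← mul_div_assoc] at h
        have := (div_lt_iff₀ hFt).1 h
        linarith [this]
      have hmul : ((2:ℝ) * t) ^ p = (2:ℝ) ^ p * t ^ p :=
        Real.mul_rpow (by norm_num) ht0.le
      have htp : (0:ℝ) ≤ t ^ p := Real.rpow_nonneg ht0.le _
      calc (2 * t) ^ p * F (2 * t) = t ^ p * ((2:ℝ) ^ p * F (2 * t)) := by rw [hmul]; ring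
        _ ≤ t ^ p * (ρ * F t) := mul_le_mul_of_nonneg_left h'.le htp
        _ = ρ * (t ^ p * F t) := by ring
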